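/- Let B be the symmetric tridiagonal matrix with (Bu)_n = (1 - s_{n+1} + s_{n-1})u_n - √(q_n(1-q_{n+1}))u_{n+1} - √(q_{n-1}(1-q_n))u_{n-1} (u_0 = u_{N+1} = 0), in the pure TASEP case ω = 0 (so q_n = q₀ for all n), with s_n non-increasing (α ≥ q₀). Then the smallest eigenvalue μ satisfies μ ≤ 1 - 2√(q₀(1-q₀))·cos(π/(N+1)) + C/(N+1)³ for a constant C independent of N, and hence μ ≤ 1 - 2√(q₀(1-q₀)) + C'N^{-2}. -/

import Mathlib

open Finset Matrix
lemma rayleigh_min {N : ℕ} (hN : 0 < N) (B : Matrix (Fin N) (Fin N) ℝ) (hB : B.IsHermitian)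
    (v : Fin N → ℝ) :
    (⨅ i, hB.eigenvalues i) * (v ⬝ᵥ v) ≤ v ⬝ᵥ (B *ᵥ v) := by
  have : Nonempty (Fin N) := ⟨⟨0, hN⟩⟩
  set U : Matrix (Fin N) (Fin N) ℝ := (hB.eigenvectorUnitary : Matrix (Fin N) (Fin N) ℝ) with hU
  have hUU : U * star U = 1 := (Matrix.mem_unitaryGroup_iff).mp hB.eigenvectorUnitary.2
  set w : Fin N → ℝ := star U *ᵥ v with hw
  have hvU : ∀ x : Fin N → ℝ, v ⬝ᵥ (U *ᵥ x) = w ⬝ᵥ x := by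
    intro x
    rw [dotProduct_mulVec, hw]
    congr 1
    rw [star_eq_conjTranspose, conjTranspose_eq_transpose_of_trivial, ← vecMul_transpose,
      transpose_transpose]
  have hD : Matrix.diagonal ((RCLike.ofReal : ℝ → ℝ) ∘ hB.eigenvalues)
      = Matrix.diagonal hB.eigenvalues := by
    norm_num [RCLike.ofReal]
  have key : v ⬝ᵥ (B *ᵥ v) = ∑ k, hB.eigenvalues k * (w k)^2 := by
    conv_lhs => rw [hB.spectral_theorem, Unitary.conjStarAlgAut_apply]
    rw [← hU, ← mulVec_mulVec, ← mulVec_mulVec, hvU, hD]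
    rw [dotProduct]
    apply Finset.sum_congr rfl
    intro k _
    rw [mulVec_diagonal]
    ring
  have keyn : v ⬝ᵥ v = ∑ k, (w k)^2 := by
    have h2 : w ⬝ᵥ w = v ⬝ᵥ v := by
      rw [← hvU w, hw, mulVec_mulVec, hUU, one_mulVec]
    rw [← h2, dotProduct]
    simp [pow_two]
  rw [key, keyn, Finset.mul_sum]
  apply Finset.sum_le_sum
  intro k _
  have h1 : (⨅ i, hB.eigenvalues i) ≤ hB.eigenvalues k :=
    ciInf_le (Finite.bddBelow_range _) k
  nlinarith [sq_nonneg (w k)]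

lemma row_sum {N : ℕ} (hN : 0 < N) (B : Matrix (Fin N) (Fin N) ℝ) (hB : B.IsHermitian)
    (d : ℕ → ℝ) (r : ℝ)
    (hdiag : ∀ i : Fin N, B i i = 1 + d (i : ℕ))
    (hoff : ∀ i j : Fin N, (j : ℕ) = (i : ℕ) + 1 → B i j = -r)
    (hzero : ∀ i j : Fin N, ((i : ℕ) + 1 < (j : ℕ) ∨ (j : ℕ) + 1 < (i : ℕ)) → B i j = 0)
    (g : ℕ → ℝ) (hg0 : g 0 = 0) (hgN : g (N + 1) = 0) (i : Fin N) :
    ∑ j, B i j * g ((j : ℕ) + 1)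
      = (1 + d (i : ℕ)) * g ((i : ℕ) + 1) - r * (g ((i : ℕ) + 2) + g (i : ℕ)) := by
  have hsym : ∀ a b : Fin N, B a b = B b a := by
    intro a b
    have := congrFun (congrFun hB b) a
    simpa [Matrix.conjTranspose_apply] using this
  have hpt : ∀ j : Fin N, B i j * g ((j : ℕ) + 1)
      = (if j = i then (1 + d (i : ℕ)) * g ((i : ℕ) + 1) else 0)
      + (if (j : ℕ) = (i : ℕ) + 1 then -r * g ((j : ℕ) + 1) else 0)
      + (if (j : ℕ) + 1 = (i : ℕ) then -r * g ((j : ℕ) + 1) else 0) := by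
    intro j
    by_cases h1 : j = i
    · subst h1
      simp [hdiag j]
    · have h1' : (j : ℕ) ≠ (i : ℕ) := fun h => h1 (Fin.ext h)
      by_cases h2 : (j : ℕ) = (i : ℕ) + 1
      · rw [hoff i j h2]
        simp [h1, h2, show (i : ℕ) + 1 + 1 ≠ (i : ℕ) by omega]
      · by_cases h3 : (j : ℕ) + 1 = (i : ℕ)
        · have : B i j = -r := by
            rw [hsym i j]
            exact hoff j i (by omega)
          rw [this]
          simp [h1, h2, h3]
        · rw [hzero i j (by omega)]
          simp [h1, h2, h3]
  rw [Finset.sum_congr rfl (fun j _ => hpt j)]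
  rw [Finset.sum_add_distrib, Finset.sum_add_distrib]
  have e1 : ∑ j : Fin N, (if j = i then (1 + d (i : ℕ)) * g ((i : ℕ) + 1) else 0)
      = (1 + d (i : ℕ)) * g ((i : ℕ) + 1) := by
    simp
  have e2 : ∑ j : Fin N, (if (j : ℕ) = (i : ℕ) + 1 then -r * g ((j : ℕ) + 1) else 0)
      = -r * g ((i : ℕ) + 2) := by
    by_cases h : (i : ℕ) + 1 < N
    · rw [Finset.sum_eq_single (⟨(i : ℕ) + 1, h⟩ : Fin N)]
      · simp
      · intro b _ hb
        have : (b : ℕ) ≠ (i : ℕ) + 1 := by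
          intro hc; apply hb; exact Fin.ext (by simpa using hc)
        simp [this]
      · simp
    · have hi : (i : ℕ) + 1 = N := by omega
      have : ∀ j : Fin N, (j : ℕ) ≠ (i : ℕ) + 1 := fun j => by omega
      rw [Finset.sum_eq_zero (fun j _ => by simp [this j])]
      rw [show (i : ℕ) + 2 = N + 1 by omega, hgN]
      ring
  have e3 : ∑ j : Fin N, (if (j : ℕ) + 1 = (i : ℕ) then -r * g ((j : ℕ) + 1) else 0)
      = -r * g (i : ℕ) := by
    by_cases h : 0 < (i : ℕ)
    · rw [Finset.sum_eq_single (⟨(i : ℕ) - 1, by omega⟩ : Fin N)]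
      · have hii : (i : ℕ) - 1 + 1 = (i : ℕ) := by omega
        simp [hii]
      · intro b _ hb
        have : (b : ℕ) + 1 ≠ (i : ℕ) := by
          intro hc; apply hb; exact Fin.ext (by simp; omega)
        simp [this]
      · simp
    · have hi : (i : ℕ) = 0 := by omega
      have : ∀ j : Fin N, (j : ℕ) + 1 ≠ (i : ℕ) := fun j => by omega
      rw [Finset.sum_eq_zero (fun j _ => by simp [this j])]
      rw [hi, hg0]
      ring
  rw [e1, e2, e3]
  ring

open Finset
lemma cos_sum_zero (M : ℕ) (hM : 2 ≤ M) :
    ∑ n ∈ range M, Real.cos (2 * Real.pi * n / M) = 0 := by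
  have hM0 : (M : ℝ) ≠ 0 := by positivity
  have hMc : (M : ℂ) ≠ 0 := Nat.cast_ne_zero.mpr (by omega)
  have h1 : ∀ n : ℕ, Real.cos (2 * Real.pi * n / M)
      = ((Complex.exp (2 * Real.pi * Complex.I / M)) ^ n).re := by
    intro n
    rw [← Complex.exp_nat_mul]
    have : (n : ℂ) * (2 * Real.pi * Complex.I / M) = ((2 * Real.pi * n / M : ℝ) : ℂ) * Complex.I := by
      push_cast
      field_simp
    rw [this, Complex.exp_ofReal_mul_I_re]
  simp only [h1]
  rw [← Complex.re_sum]
  have hpi : (2 * (Real.pi : ℂ) * Complex.I) ≠ 0 := by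
    simp [Real.pi_ne_zero, Complex.I_ne_zero]
  have hz : Complex.exp (2 * Real.pi * Complex.I / M) ≠ 1 := by
    intro h
    rw [Complex.exp_eq_one_iff] at h
    obtain ⟨n, hn⟩ := h
    rw [div_eq_iff hMc] at hn
    have h3 : 2 * (Real.pi : ℂ) * Complex.I * 1 = 2 * (Real.pi : ℂ) * Complex.I * (n * M) := by
      rw [mul_one]; linear_combination hn
    have h2 : (1 : ℂ) = n * M := mul_left_cancel₀ hpi h3
    have h4 : (1 : ℤ) = n * M := by exact_mod_cast h2
    have h5 : (M : ℤ) ∣ 1 := ⟨n, by linarith⟩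
    have := Int.le_of_dvd one_pos h5
    omega
  have hgeom := geom_sum_eq hz M
  rw [hgeom, ← Complex.exp_nat_mul]
  have : (M : ℂ) * (2 * Real.pi * Complex.I / M) = 2 * Real.pi * Complex.I := by
    field_simp
  rw [this, Complex.exp_two_pi_mul_I]
  simp

lemma sin_sq_sum (N : ℕ) (hN : 0 < N) :
    ∑ i ∈ range N, Real.sin (Real.pi * ((i : ℝ) + 1) / ((N : ℝ) + 1)) ^ 2
      = ((N : ℝ) + 1) / 2 := by
  have hc := cos_sum_zero (N + 1) (by omega)
  rw [Finset.sum_range_succ'] at hc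
  norm_num at hc
  push_cast at hc
  have key : ∀ i : ℕ, Real.sin (Real.pi * ((i : ℝ) + 1) / ((N : ℝ) + 1)) ^ 2
      = 1 / 2 - Real.cos (2 * Real.pi * ((i : ℝ) + 1) / ((N : ℝ) + 1)) / 2 := by
    intro i
    rw [Real.sin_sq_eq_half_sub]
    ring_nf
  simp only [key]
  rw [Finset.sum_sub_distrib, Finset.sum_const, ← Finset.sum_div]
  have hc' : ∑ i ∈ range N, Real.cos (2 * Real.pi * ((i : ℝ) + 1) / ((N : ℝ) + 1)) = -1 := by
    linarith
  rw [hc']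
  simp
  ring

lemma gap_bound (q₀ α γ : ℝ) (hq1 : 1 / 2 < q₀) (hq2 : q₀ < 1)
    (hγ : γ = (1 - q₀) / q₀) (hα : q₀ ≤ α)
    (s : ℕ → ℝ)
    (hs : ∀ n, s n = q₀ + (2 * q₀ - 1) *
      ((1 - γ ^ n * (α - q₀) / (α - (1 - q₀)))⁻¹ - 1)) :
    ∃ C₀ > (0:ℝ), ∀ n, 0 ≤ s n - s (n + 2) ∧ s n - s (n + 2) ≤ C₀ * γ ^ n := by
  have hq0 : 0 < q₀ := by linarith
  have hγ0 : 0 < γ := by rw [hγ]; apply div_pos <;> linarith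
  have hγ1 : γ < 1 := by rw [hγ, div_lt_one hq0]; linarith
  set β : ℝ := (α - q₀) / (α - (1 - q₀)) with hβ
  have hden : 0 < α - (1 - q₀) := by linarith
  have hβ0 : 0 ≤ β := div_nonneg (by linarith) hden.le
  have hβ1 : β < 1 := by rw [hβ, div_lt_one hden]; linarith
  have h1β : 0 < 1 - β := by linarith
  have hC0 : (0:ℝ) < (2 * q₀ - 1) * β / (1 - β) ^ 2 + 1 := by
    have : 0 ≤ (2 * q₀ - 1) * β / (1 - β) ^ 2 :=
      div_nonneg (mul_nonneg (by linarith) hβ0) (by positivity)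
    linarith
  refine ⟨(2 * q₀ - 1) * β / (1 - β) ^ 2 + 1, hC0, fun n => ?_⟩
  have e : ∀ m : ℕ, γ ^ m * (α - q₀) / (α - (1 - q₀)) = γ ^ m * β := fun m =>
    mul_div_assoc _ _ _
  have hpow : ∀ m : ℕ, 0 ≤ γ ^ m * β ∧ γ ^ m * β ≤ β := by
    intro m
    constructor
    · positivity
    · nlinarith [pow_le_one₀ hγ0.le hγ1.le (n := m), pow_nonneg hγ0.le m]
  set a : ℝ := γ ^ n * β with ha
  set b : ℝ := γ ^ (n + 2) * β with hb
  have ha1 : a ≤ β := (hpow n).2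
  have hb0 : 0 ≤ b := (hpow (n + 2)).1
  have hb1 : b ≤ β := (hpow (n + 2)).2
  have ha0 : 0 ≤ a := (hpow n).1
  have hba : b ≤ a := by
    rw [ha, hb, pow_add]
    nlinarith [pow_nonneg hγ0.le n, pow_le_one₀ hγ0.le hγ1.le (n := 2)]
  have h1a : 0 < 1 - a := by linarith
  have h1b : 0 < 1 - b := by linarith
  have hgap : s n - s (n + 2) = (2 * q₀ - 1) * ((a - b) / ((1 - a) * (1 - b))) := by
    rw [hs n, hs (n + 2), e n, e (n + 2), ← ha, ← hb]
    have hinv : (1 - a)⁻¹ - (1 - b)⁻¹ = (a - b) / ((1 - a) * (1 - b)) := by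
      field_simp
      ring
    rw [show q₀ + (2 * q₀ - 1) * ((1 - a)⁻¹ - 1) - (q₀ + (2 * q₀ - 1) * ((1 - b)⁻¹ - 1))
        = (2 * q₀ - 1) * ((1 - a)⁻¹ - (1 - b)⁻¹) by ring, hinv]
  constructor
  · rw [hgap]
    have : 0 ≤ (a - b) / ((1 - a) * (1 - b)) := div_nonneg (by linarith) (by positivity)
    nlinarith
  · rw [hgap]
    have hdiv : (a - b) / ((1 - a) * (1 - b)) ≤ a / (1 - β) ^ 2 := by
      apply div_le_div₀ (by positivity) (by linarith) (pow_pos h1β 2)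
      nlinarith
    have hfin : (2 * q₀ - 1) * ((a - b) / ((1 - a) * (1 - b)))
        ≤ (2 * q₀ - 1) * (a / (1 - β) ^ 2) := by
      apply mul_le_mul_of_nonneg_left hdiv (by linarith)
    have heq : (2 * q₀ - 1) * (a / (1 - β) ^ 2) = ((2 * q₀ - 1) * β / (1 - β) ^ 2) * γ ^ n := by
      rw [ha]; ring
    have hlast : ((2 * q₀ - 1) * β / (1 - β) ^ 2) * γ ^ n
        ≤ ((2 * q₀ - 1) * β / (1 - β) ^ 2 + 1) * γ ^ n := by
      apply mul_le_mul_of_nonneg_right (by linarith) (pow_nonneg hγ0.le n)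
    linarith

lemma geom_partial (γ : ℝ) (h0 : 0 < γ) (h1 : γ < 1) :
    ∃ S : ℝ, 0 < S ∧ ∀ N, ∑ i ∈ Finset.range N, ((i : ℝ) + 1) ^ 2 * γ ^ i ≤ S := by
  have hnorm : ‖γ‖ < 1 := by rwa [Real.norm_eq_abs, abs_of_pos h0]
  have h2 : Summable (fun i : ℕ => ((i : ℝ)) ^ 2 * γ ^ i) :=
    summable_pow_mul_geometric_of_norm_lt_one 2 hnorm
  have h1' : Summable (fun i : ℕ => ((i : ℝ)) * γ ^ i) := by
    simpa using summable_pow_mul_geometric_of_norm_lt_one 1 hnorm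
  have h0' : Summable (fun i : ℕ => γ ^ i) := summable_geometric_of_lt_one h0.le h1
  have hsum : Summable (fun i : ℕ => ((i : ℝ) + 1) ^ 2 * γ ^ i) := by
    have h := (h2.add (h1'.mul_left 2)).add h0'
    apply h.congr
    intro i
    ring
  refine ⟨∑' i : ℕ, ((i : ℝ) + 1) ^ 2 * γ ^ i, ?_, fun N => ?_⟩
  · exact Summable.tsum_pos hsum (fun i => by positivity) 0 (by norm_num)
  · exact Summable.sum_le_tsum _ (fun i _ => by positivity) hsum

/-- Courant upper bound for the smallest eigenvalue of the pure-TASEP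
simplified relaxation matrix (ω = 0, α ≥ q₀). -/
theorem courant_upper_bound_pure_tasep
    (q₀ α γ : ℝ) (hq1 : 1 / 2 < q₀) (hq2 : q₀ < 1)
    (hγ : γ = (1 - q₀) / q₀) (hα : q₀ ≤ α)
    (s : ℕ → ℝ)
    (hs : ∀ n, s n = q₀ + (2 * q₀ - 1) *
      ((1 - γ ^ n * (α - q₀) / (α - (1 - q₀)))⁻¹ - 1)) :
    ∃ C > (0 : ℝ), ∃ C' > (0 : ℝ), ∀ N : ℕ, 0 < N →
      ∀ B : Matrix (Fin N) (Fin N) ℝ, ∀ hB : B.IsHermitian,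
      (∀ i : Fin N, B i i = 1 - s ((i : ℕ) + 2) + s (i : ℕ)) →
      (∀ i j : Fin N, (j : ℕ) = (i : ℕ) + 1 →
        B i j = -Real.sqrt (q₀ * (1 - q₀))) →
      (∀ i j : Fin N, ((i : ℕ) + 1 < (j : ℕ) ∨ (j : ℕ) + 1 < (i : ℕ)) →
        B i j = 0) →
      (⨅ i, hB.eigenvalues i) ≤
          1 - 2 * Real.sqrt (q₀ * (1 - q₀)) * Real.cos (Real.pi / (N + 1))
            + C / ((N : ℝ) + 1) ^ 3 ∧
      (⨅ i, hB.eigenvalues i) ≤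
          1 - 2 * Real.sqrt (q₀ * (1 - q₀)) + C' / (N : ℝ) ^ 2 := by
  obtain ⟨C₀, hC₀, hd⟩ := gap_bound q₀ α γ hq1 hq2 hγ hα s hs
  have hq0 : 0 < q₀ := by linarith
  have hγ0 : 0 < γ := by rw [hγ]; apply div_pos <;> linarith
  have hγ1 : γ < 1 := by rw [hγ, div_lt_one hq0]; linarith
  obtain ⟨S, hS, hSle⟩ := geom_partial γ hγ0 hγ1
  set r : ℝ := Real.sqrt (q₀ * (1 - q₀)) with hr
  have hr0 : 0 ≤ r := Real.sqrt_nonneg _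
  have hπ : 0 < Real.pi := Real.pi_pos
  set C : ℝ := 2 * C₀ * Real.pi ^ 2 * S + 1 with hC
  have hCpos : 0 < C := by positivity
  refine ⟨C, hCpos, r * Real.pi ^ 2 + C, by positivity, ?_⟩
  intro N hN B hB hdiag hoff hzero
  set M : ℝ := (N : ℝ) + 1 with hM
  have hM0 : (0 : ℝ) < M := by positivity
  have hM1 : (1 : ℝ) ≤ M := by simp [hM]
  set g : ℕ → ℝ := fun n => Real.sin (Real.pi * n / M) with hgdef
  have hg0 : g 0 = 0 := by simp [hgdef]
  have hgN : g (N + 1) = 0 := by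
    have : Real.pi * ((N : ℕ) + 1 : ℕ) / M = Real.pi := by
      push_cast
      rw [hM]
      field_simp
    simp only [hgdef, this, Real.sin_pi]
  set v : Fin N → ℝ := fun i => g ((i : ℕ) + 1) with hv
  set θ : ℝ := Real.pi / M with hθ
  have htrig : ∀ n : ℕ, g (n + 2) + g n = 2 * Real.cos θ * g (n + 1) := by
    intro n
    simp only [hgdef]
    have e1 : Real.pi * ((n : ℕ) + 2 : ℕ) / M = Real.pi * ((n : ℕ) + 1 : ℕ) / M + θ := by
      rw [hθ]; push_cast; field_simp; ring
    have e2 : Real.pi * (n : ℕ) / M = Real.pi * ((n : ℕ) + 1 : ℕ) / M - θ := by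
      rw [hθ]; push_cast; field_simp; ring
    rw [e1, e2, Real.sin_add, Real.sin_sub]
    ring
  have hrow : ∀ i : Fin N, (B *ᵥ v) i
      = (1 + (s (i : ℕ) - s ((i : ℕ) + 2))) * v i - r * (2 * Real.cos θ * v i) := by
    intro i
    have h1 : (B *ᵥ v) i = ∑ j, B i j * v j := by
      simp [Matrix.mulVec, dotProduct]
    rw [h1]
    rw [row_sum hN B hB (fun n => s n - s (n + 2)) r
      (fun i => (hdiag i).trans (by ring)) hoff hzero g hg0 hgN i, htrig (i : ℕ)]
  have hsum1 : ∑ i : Fin N, (v i) ^ 2 = M / 2 := by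
    rw [Fin.sum_univ_eq_sum_range (fun k => (g (k + 1)) ^ 2) N]
    rw [← sin_sq_sum N hN]
    apply Finset.sum_congr rfl
    intro i _
    simp only [hgdef]
    congr 2
    push_cast
    ring
  set P : ℝ := ∑ i : Fin N, (s (i : ℕ) - s ((i : ℕ) + 2)) * (v i) ^ 2 with hP
  have hquad : v ⬝ᵥ (B *ᵥ v) = (1 - 2 * r * Real.cos θ) * (M / 2) + P := by
    rw [dotProduct]
    have hterm : ∀ i : Fin N, v i * (B *ᵥ v) i
        = (1 - 2 * r * Real.cos θ) * (v i) ^ 2 + (s (i : ℕ) - s ((i : ℕ) + 2)) * (v i) ^ 2 := by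
      intro i
      rw [hrow i]
      ring
    rw [Finset.sum_congr rfl (fun i _ => hterm i), Finset.sum_add_distrib,
      ← Finset.mul_sum, hsum1]
  have hPle : P ≤ C₀ * Real.pi ^ 2 / M ^ 2 * S := by
    have hterm : ∀ i : Fin N, (s (i : ℕ) - s ((i : ℕ) + 2)) * (v i) ^ 2
        ≤ C₀ * Real.pi ^ 2 / M ^ 2 * (((i : ℝ) + 1) ^ 2 * γ ^ (i : ℕ)) := by
      intro i
      have h1 : (s (i : ℕ) - s ((i : ℕ) + 2)) * (v i) ^ 2 ≤ (C₀ * γ ^ (i : ℕ)) * (v i) ^ 2 :=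
        mul_le_mul_of_nonneg_right (hd (i : ℕ)).2 (sq_nonneg _)
      have h2 : (v i) ^ 2 ≤ (Real.pi * ((i : ℕ) + 1 : ℕ) / M) ^ 2 := by
        simp only [hv, hgdef]
        exact Real.sin_sq_le_sq
      have h3 : (C₀ * γ ^ (i : ℕ)) * (v i) ^ 2
          ≤ (C₀ * γ ^ (i : ℕ)) * (Real.pi * ((i : ℕ) + 1 : ℕ) / M) ^ 2 :=
        mul_le_mul_of_nonneg_left h2 (by positivity)
      have h4 : (C₀ * γ ^ (i : ℕ)) * (Real.pi * ((i : ℕ) + 1 : ℕ) / M) ^ 2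
          = C₀ * Real.pi ^ 2 / M ^ 2 * (((i : ℝ) + 1) ^ 2 * γ ^ (i : ℕ)) := by
        push_cast
        field_simp
      linarith
    calc P ≤ ∑ i : Fin N, C₀ * Real.pi ^ 2 / M ^ 2 * (((i : ℝ) + 1) ^ 2 * γ ^ (i : ℕ)) :=
          Finset.sum_le_sum (fun i _ => hterm i)
      _ = C₀ * Real.pi ^ 2 / M ^ 2 * ∑ i ∈ range N, (((i : ℝ) + 1) ^ 2 * γ ^ i) := by
          rw [← Finset.mul_sum, Fin.sum_univ_eq_sum_range (fun k => ((k : ℝ) + 1) ^ 2 * γ ^ k) N]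
      _ ≤ C₀ * Real.pi ^ 2 / M ^ 2 * S :=
          mul_le_mul_of_nonneg_left (hSle N) (by positivity)
  have hvv : v ⬝ᵥ v = M / 2 := by
    rw [dotProduct, ← hsum1]
    apply Finset.sum_congr rfl
    intro i _
    ring
  have hray := rayleigh_min hN B hB v
  rw [hvv, hquad] at hray
  obtain ⟨lam, hlam⟩ : ∃ l : ℝ, (⨅ i, hB.eigenvalues i) = l := ⟨_, rfl⟩
  rw [hlam] at hray ⊢
  -- first bound
  have hb1 : lam ≤ 1 - 2 * r * Real.cos θ + C / M ^ 3 := by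
    have hstep : (lam - (1 - 2 * r * Real.cos θ)) * (M / 2) ≤ P := by nlinarith [hray]
    have hstep2 : lam - (1 - 2 * r * Real.cos θ) ≤ P / (M / 2) := by
      rw [le_div_iff₀ (by positivity)]
      exact hstep
    have hstep3 : P / (M / 2) ≤ (C₀ * Real.pi ^ 2 / M ^ 2 * S) / (M / 2) :=
      (div_le_div_iff_of_pos_right (by positivity)).mpr hPle
    have hstep4 : (C₀ * Real.pi ^ 2 / M ^ 2 * S) / (M / 2)
        = (2 * C₀ * Real.pi ^ 2 * S) / M ^ 3 := by
      field_simp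
    have hstep5 : (2 * C₀ * Real.pi ^ 2 * S) / M ^ 3 ≤ C / M ^ 3 := by
      apply (div_le_div_iff_of_pos_right (by positivity)).mpr
      rw [hC]
      linarith only []
    linarith only [hstep2, hstep3, hstep4, hstep5]
  constructor
  · exact hb1
  · -- second bound
    have hcos : 1 - θ ^ 2 / 2 ≤ Real.cos θ := Real.one_sub_sq_div_two_le_cos
    have hNR : (1 : ℝ) ≤ (N : ℝ) := by exact_mod_cast hN
    have hb2 : lam ≤ 1 - 2 * r + r * Real.pi ^ 2 / M ^ 2 + C / M ^ 3 := by
      have h5' := mul_le_mul_of_nonneg_left hcos (by positivity : (0:ℝ) ≤ 2 * r)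
      have h5 : -(2 * r * Real.cos θ) ≤ -(2 * r) + r * θ ^ 2 := by linarith only [h5']
      have h6 : θ ^ 2 = Real.pi ^ 2 / M ^ 2 := by rw [hθ, div_pow]
      rw [h6] at h5
      have heq : r * (Real.pi ^ 2 / M ^ 2) = r * Real.pi ^ 2 / M ^ 2 := by ring
      linarith only [hb1, h5, heq]
    have hNpos : (0 : ℝ) < (N : ℝ) := by linarith
    have hsq : (N : ℝ) ^ 2 ≤ M ^ 2 := by
      rw [hM]
      exact pow_le_pow_left₀ hNpos.le (by linarith) 2
    have hcube : (N : ℝ) ^ 2 ≤ M ^ 3 := by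
      rw [hM]
      calc (N : ℝ) ^ 2 ≤ ((N : ℝ) + 1) ^ 2 := pow_le_pow_left₀ hNpos.le (by linarith) 2
        _ ≤ ((N : ℝ) + 1) ^ 3 := pow_le_pow_right₀ (by linarith) (by norm_num)
    have h7 : r * Real.pi ^ 2 / M ^ 2 ≤ r * Real.pi ^ 2 / (N : ℝ) ^ 2 :=
      div_le_div_of_nonneg_left (by positivity) (pow_pos hNpos 2) hsq
    have h8 : C / M ^ 3 ≤ C / (N : ℝ) ^ 2 :=
      div_le_div_of_nonneg_left hCpos.le (pow_pos hNpos 2) hcube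
    have h9 : r * Real.pi ^ 2 / (N : ℝ) ^ 2 + C / (N : ℝ) ^ 2
        = (r * Real.pi ^ 2 + C) / (N : ℝ) ^ 2 := by ring
    linarith only [hb2, h7, h8, h9]
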